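/- Order-statistics sandwich lemma: Let m, q, b be integers with 0 ≤ q ≤ b ≤ ⌈m/2⌉ − 1. Let ṽ_1, …, ṽ_m be real numbers and suppose there is a subset S ⊆ {1, …, m} with |S| = m − q such that the multiset of correct values {v_1, …, v_{m−q}} equals the multiset {ṽ_i : i ∈ S} (i.e., at most q of the ṽ_i are Byzantine). Then for every integer i with 1 ≤ i ≤ m − 2b, one has v_{(b−q+i):(m−q)} ≤ ṽ_{(b+i):m} ≤ v_{(b+i):(m−q)}. -/

import Mathlib

lemma sublist_sorted_bounds {K L : List ℝ} (h : List.Sublist K L) (hL : L.Pairwise (· ≤ ·))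
    (j : ℕ) (hj : j < K.length) :
    L.getD j 0 ≤ K.getD j 0 ∧ K.getD j 0 ≤ L.getD (j + (L.length - K.length)) 0 := by
  obtain ⟨f, hf⟩ := List.sublist_iff_exists_fin_orderEmbedding_get_eq.mp h
  have hlen : K.length ≤ L.length := h.length_le
  have hmono : StrictMono f := f.strictMono
  have key : ∀ (d : ℕ) (a : Fin K.length) (h' : (a : ℕ) + d < K.length),
      (f a : ℕ) + d ≤ (f ⟨(a : ℕ) + d, h'⟩ : ℕ) := by
    intro d
    induction d with
    | zero => intro a h'; simp
    | succ d ih =>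
      intro a h'
      have h'' : (a : ℕ) + d < K.length := by omega
      have h1 := ih a h''
      have step : (f ⟨(a : ℕ) + d, h''⟩ : ℕ) < (f ⟨(a : ℕ) + d + 1, by omega⟩ : ℕ) := by
        exact_mod_cast Fin.lt_def.mp (hmono (by simp [Fin.lt_def]))
      have heq : (⟨(a : ℕ) + (d + 1), h'⟩ : Fin K.length) = ⟨(a : ℕ) + d + 1, by omega⟩ := rfl
      rw [heq]
      omega
  have hub : ∀ i : Fin K.length, (f i : ℕ) ≤ (i : ℕ) + (L.length - K.length) := by
    intro i
    have hd : (i : ℕ) + (K.length - 1 - (i : ℕ)) < K.length := by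
      have := i.isLt; omega
    have h1 := key (K.length - 1 - (i : ℕ)) i hd
    have h2 : (f ⟨(i : ℕ) + (K.length - 1 - (i : ℕ)), hd⟩ : ℕ) < L.length := (f _).isLt
    have := i.isLt
    omega
  have hle : ∀ i : Fin K.length, (i : ℕ) ≤ (f i : ℕ) := by
    intro i
    have h0 := key (i : ℕ) ⟨0, i.pos⟩ (by simpa using i.isLt)
    have heq : (⟨(0 : ℕ) + (i : ℕ), by simpa using i.isLt⟩ : Fin K.length) = i := by
      apply Fin.ext; simp
    rw [heq] at h0
    omega
  constructor
  · have hj' : j < L.length := lt_of_lt_of_le hj hlen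
    rw [List.getD_eq_getElem _ _ hj', List.getD_eq_getElem _ _ hj]
    have h1 : K.get ⟨j, hj⟩ = L.get (f ⟨j, hj⟩) := hf _
    have h2 : L.get ⟨j, hj'⟩ ≤ L.get (f ⟨j, hj⟩) :=
      hL.rel_get_of_le (by simpa [Fin.le_def] using hle ⟨j, hj⟩)
    simp only [List.get_eq_getElem] at h1 h2
    rw [h1]; exact h2
  · have hj2 : j + (L.length - K.length) < L.length := by omega
    rw [List.getD_eq_getElem _ _ hj2, List.getD_eq_getElem _ _ hj]
    have h1 : K.get ⟨j, hj⟩ = L.get (f ⟨j, hj⟩) := hf _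
    have h2 : L.get (f ⟨j, hj⟩) ≤ L.get ⟨j + (L.length - K.length), hj2⟩ :=
      hL.rel_get_of_le (by simpa [Fin.le_def] using hub ⟨j, hj⟩)
    simp only [List.get_eq_getElem] at h1 h2
    rw [h1]; exact h2

/-- The `k`-th smallest element (1-indexed order statistic) of `u 1, …, u m`. -/
noncomputable def orderStat {m : ℕ} (u : Fin m → ℝ) (k : ℕ) : ℝ :=
  ((Multiset.map u Finset.univ.val).sort (· ≤ ·)).getD (k - 1) 0

/-- Order-statistics sandwich lemma: if among `ṽ_1, …, ṽ_m` at most `q` values are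
Byzantine (i.e. there is a subset `S` of indices of size `m - q` on which `ṽ`
agrees, as a multiset, with the correct values `v_1, …, v_{m-q}`), and
`0 ≤ q ≤ b ≤ ⌈m/2⌉ - 1`, then for every `1 ≤ i ≤ m - 2b`,
`v_{(b-q+i):(m-q)} ≤ ṽ_{(b+i):m} ≤ v_{(b+i):(m-q)}`. -/
theorem orderStat_sandwich (m q b : ℕ) (hqb : q ≤ b) (hb : b ≤ (m + 1) / 2 - 1)
    (vt : Fin m → ℝ) (v : Fin (m - q) → ℝ)
    (hS : ∃ S : Finset (Fin m), S.card = m - q ∧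
      Multiset.map v Finset.univ.val = Multiset.map vt S.val) :
    ∀ i : ℕ, 1 ≤ i → i ≤ m - 2 * b →
      orderStat v (b - q + i) ≤ orderStat vt (b + i) ∧
      orderStat vt (b + i) ≤ orderStat v (b + i) := by
  intro i hi1 hi2
  obtain ⟨S, hScard, hSeq⟩ := hS
  set K := ((Multiset.map v Finset.univ.val).sort (· ≤ ·)) with hK
  set L := ((Multiset.map vt Finset.univ.val).sort (· ≤ ·)) with hL
  have hMle : Multiset.map v Finset.univ.val ≤ Multiset.map vt Finset.univ.val := by
    rw [hSeq]
    exact Multiset.map_le_map (Finset.val_le_iff.mpr (Finset.subset_univ S))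
  have hsub : List.Sublist K L := by
    apply List.sublist_of_subperm_of_pairwise _ (Multiset.pairwise_sort _ _) (Multiset.pairwise_sort _ _)
    rw [← Multiset.coe_le, Multiset.sort_eq, Multiset.sort_eq]
    exact hMle
  have hKlen : K.length = m - q := by
    simp [hK, Multiset.length_sort]
  have hLlen : L.length = m := by
    simp [hL, Multiset.length_sort]
  have hqm : q ≤ m := le_trans hqb (by omega)
  have hm : 2 * b + 1 ≤ m := by omega
  have hbi : b + i - 1 < K.length := by rw [hKlen]; omega
  have hbqi : b - q + i - 1 < K.length := by rw [hKlen]; omega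
  have H1 := sublist_sorted_bounds hsub (Multiset.pairwise_sort _ _) (b + i - 1) hbi
  have H2 := sublist_sorted_bounds hsub (Multiset.pairwise_sort _ _) (b - q + i - 1) hbqi
  have hdiff : L.length - K.length = q := by omega
  constructor
  · have := H2.2
    rw [hdiff] at this
    have heq : b - q + i - 1 + q = b + i - 1 := by omega
    rw [heq] at this
    exact this
  · exact H1.1
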